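/- Let n ≥ 1, λ > 0, ω ∈ ℝ^n, σ > 0, and v ∈ B_σ(T^n). Then there exists u ∈ B_σ(T^n) (on the same strip T^n_σ, with no loss of analyticity width) such that (−λ + D_ω) u = v on the interior of T^n_σ and |u|_σ ≤ λ^{−1} |v|_σ. -/

import Mathlib

open Complex MeasureTheory
open scoped BigOperators

open Set Metric

noncomputable section

/-- The complex strip `T^n_σ = {z ∈ ℂ^n : |Im z_j| ≤ σ}`. -/
def TStrip (n : ℕ) (σ : ℝ) : Set (Fin n → ℂ) := {z | ∀ j, |(z j).im| ≤ σ}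

/-- Membership in the space `B_σ(T^n)`: holomorphic in the interior of the strip,
continuous and bounded on the strip, `2π`-periodic in each variable, real on `ℝ^n`. -/
def MemB (n : ℕ) (σ : ℝ) (u : (Fin n → ℂ) → ℂ) : Prop :=
  DifferentiableOn ℂ u (interior (TStrip n σ)) ∧
  ContinuousOn u (TStrip n σ) ∧
  (∀ z ∈ TStrip n σ, ∀ j, u (Function.update z j (z j + 2 * Real.pi)) = u z) ∧
  (∀ φ : Fin n → ℝ, (u (fun j => (φ j : ℂ))).im = 0) ∧
  ∃ M : ℝ, ∀ z ∈ TStrip n σ, ‖u z‖ ≤ M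

/-- The strict open strip. -/
def SStrip (n : ℕ) (σ : ℝ) : Set (Fin n → ℂ) := {z | ∀ j, |(z j).im| < σ}

lemma isOpen_SStrip (n : ℕ) (σ : ℝ) : IsOpen (SStrip n σ) := by
  have : SStrip n σ = ⋂ j, (fun z : Fin n → ℂ => (z j).im) ⁻¹' Ioo (-σ) σ := by
    ext z; simp [SStrip, abs_lt]
  rw [this]
  exact isOpen_iInter_of_finite fun j =>
    (Complex.continuous_im.comp (continuous_apply j)).isOpen_preimage _ isOpen_Ioo

lemma interior_TStrip (n : ℕ) (σ : ℝ) : interior (TStrip n σ) = SStrip n σ := by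
  apply Subset.antisymm
  · intro z hz
    rw [mem_interior_iff_mem_nhds] at hz
    obtain ⟨ε, hε, hball⟩ := Metric.mem_nhds_iff.1 hz
    intro j
    have h1 : Function.update z j (z j + Complex.I * (ε / 2)) ∈ TStrip n σ := by
      apply hball
      rw [mem_ball, dist_pi_lt_iff hε]
      intro k
      rcases eq_or_ne k j with rfl | hk
      · simp only [Function.update_self, Complex.dist_eq, add_sub_cancel_left]
        rw [norm_mul, Complex.norm_I, one_mul, norm_div, Complex.norm_real, Real.norm_eq_abs,
          Complex.norm_two, abs_of_pos hε]
        linarith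
      · simp [Function.update_of_ne hk, hε]
    have h2 : Function.update z j (z j - Complex.I * (ε / 2)) ∈ TStrip n σ := by
      apply hball
      rw [mem_ball, dist_pi_lt_iff hε]
      intro k
      rcases eq_or_ne k j with rfl | hk
      · simp only [Function.update_self, Complex.dist_eq, sub_sub_cancel_left]
        rw [norm_neg, norm_mul, Complex.norm_I, one_mul, norm_div, Complex.norm_real,
          Real.norm_eq_abs, Complex.norm_two, abs_of_pos hε]
        linarith
      · simp [Function.update_of_ne hk, hε]
    have e1 := h1 j
    have e2 := h2 j
    simp only [Function.update_self] at e1 e2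
    have i1 : (z j + Complex.I * (ε / 2)).im = (z j).im + ε / 2 := by simp
    have i2 : (z j - Complex.I * (ε / 2)).im = (z j).im - ε / 2 := by simp
    rw [i1] at e1; rw [i2] at e2
    rw [abs_le] at e1 e2
    rw [abs_lt]
    constructor <;> nlinarith
  · exact interior_maximal (fun z hz j => (hz j).le) (isOpen_SStrip n σ)

/-- Cauchy-type estimate for the derivative of a bounded holomorphic function on the strip. -/
lemma fderiv_bound_on_strip {n : ℕ} {σ : ℝ} {v : (Fin n → ℂ) → ℂ}
    (hvd : DifferentiableOn ℂ v (interior (TStrip n σ)))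
    (hvc : ContinuousOn v (TStrip n σ)) {M δ : ℝ} (hδ : 0 < δ)
    (hM : ∀ z ∈ TStrip n σ, ‖v z‖ ≤ M)
    {w : Fin n → ℂ} (hw : ∀ j, |(w j).im| + δ ≤ σ) :
    ‖fderiv ℂ v w‖ ≤ M / δ := by
  have hwT : w ∈ TStrip n σ := fun j => by have := hw j; linarith
  have hM0 : 0 ≤ M := le_trans (norm_nonneg _) (hM w hwT)
  -- membership of perturbed points
  have hkey : ∀ y : Fin n → ℂ, ∀ j, |(y j).im| ≤ |(w j).im| + ‖y - w‖ := by
    intro y j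
    have h1 : |(y j).im - (w j).im| ≤ ‖y - w‖ := by
      have h0 : (y j).im - (w j).im = ((y - w) j).im := by simp
      rw [h0]
      exact le_trans (Complex.abs_im_le_norm _) (norm_le_pi_norm (y - w) j)
    have h3 := abs_sub_abs_le_abs_sub (y j).im (w j).im
    linarith
  have hmem : ∀ y : Fin n → ℂ, ‖y - w‖ ≤ δ → y ∈ TStrip n σ := by
    intro y hy j
    have := hkey y j
    have := hw j
    linarith
  have hmemS : ∀ y : Fin n → ℂ, ‖y - w‖ < δ → y ∈ SStrip n σ := by
    intro y hy j
    have := hkey y j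
    have := hw j
    linarith
  apply ContinuousLinearMap.opNorm_le_bound _ (div_nonneg hM0 hδ.le)
  intro h
  rcases eq_or_ne h 0 with rfl | hh
  · simp
  have hnorm : ‖h‖ ≠ 0 := norm_ne_zero_iff.2 hh
  set h' : Fin n → ℂ := ‖h‖⁻¹ • h with hh'
  have hh'norm : ‖h'‖ = 1 := by
    rw [hh', norm_smul, norm_inv, norm_norm, inv_mul_cancel₀ hnorm]
  set g : ℂ → ℂ := fun ζ => v (w + ζ • h') with hg
  have hpath : ∀ ζ : ℂ, ‖(w + ζ • h') - w‖ = ‖ζ‖ := by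
    intro ζ
    rw [add_sub_cancel_left, norm_smul, hh'norm, mul_one]
  have hd : ∀ ζ ∈ ball (0 : ℂ) δ, HasDerivAt g ((fderiv ℂ v (w + ζ • h')) h') ζ := by
    intro ζ hζ
    have hmem' : w + ζ • h' ∈ interior (TStrip n σ) := by
      rw [interior_TStrip]
      apply hmemS
      rw [hpath]
      simpa [Complex.dist_eq] using hζ
    have hva : DifferentiableAt ℂ v (w + ζ • h') :=
      hvd.differentiableAt (isOpen_interior.mem_nhds hmem')
    have hp : HasDerivAt (fun ζ : ℂ => w + ζ • h') h' ζ := by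
      simpa using ((hasDerivAt_id ζ).smul_const h').const_add w
    exact hva.hasFDerivAt.comp_hasDerivAt ζ hp
  have hdc : DiffContOnCl ℂ g (ball (0 : ℂ) δ) := by
    constructor
    · exact fun ζ hζ => ((hd ζ hζ).differentiableAt).differentiableWithinAt
    · rw [closure_ball (0 : ℂ) hδ.ne']
      apply hvc.comp
      · exact (Continuous.continuousOn (by continuity))
      · intro ζ hζ
        apply hmem
        rw [hpath]
        simpa [Complex.dist_eq] using hζ
  have hsph : ∀ ζ ∈ sphere (0 : ℂ) δ, ‖g ζ‖ ≤ M := by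
    intro ζ hζ
    apply hM
    apply hmem
    rw [hpath]
    simp only [mem_sphere_iff_norm, sub_zero] at hζ
    rw [hζ]
  have hest := Complex.norm_deriv_le_of_forall_mem_sphere_norm_le hδ hdc hsph
  have hder0 : deriv g 0 = (fderiv ℂ v w) h' := by
    have := (hd 0 (mem_ball_self hδ)).deriv
    simpa using this
  rw [hder0] at hest
  have key : (fderiv ℂ v w) h = ‖h‖ • (fderiv ℂ v w) h' := by
    rw [hh', ContinuousLinearMap.map_smul_of_tower, smul_smul, mul_inv_cancel₀ hnorm, one_smul]
  rw [key, norm_smul, norm_norm]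
  calc ‖h‖ * ‖(fderiv ℂ v w) h'‖ ≤ ‖h‖ * (M / δ) :=
        mul_le_mul_of_nonneg_left hest (norm_nonneg _)
    _ = M / δ * ‖h‖ := mul_comm _ _

/-- Splitting an integral over `Ioi a`. -/
lemma integral_Ioi_split {f : ℝ → ℂ} (hf : ∀ c : ℝ, IntegrableOn f (Ioi c)) (a b : ℝ) :
    ∫ t in Ioi a, f t = (∫ t in a..b, f t) + ∫ t in Ioi b, f t := by
  have key : ∀ {a b : ℝ}, a ≤ b →
      ∫ t in Ioi a, f t = (∫ t in a..b, f t) + ∫ t in Ioi b, f t := by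
    intro a b hab
    rw [intervalIntegral.integral_of_le hab, ← setIntegral_union (Ioc_disjoint_Ioi le_rfl)
      measurableSet_Ioi ((hf a).mono Ioc_subset_Ioi_self le_rfl) (hf b),
      Ioc_union_Ioi_eq_Ioi hab]
  rcases le_total a b with hab | hba
  · exact key hab
  · have := key hba
    rw [intervalIntegral.integral_symm b a]
    rw [this]
    ring

/-- Translation of an integral over `Ioi`. -/
lemma integral_Ioi_comp_add (f : ℝ → ℂ) (s : ℝ) :
    ∫ t in Ioi (0 : ℝ), f (t + s) = ∫ t in Ioi s, f t := by
  have h := (measurePreserving_add_right (volume : Measure ℝ) s).setIntegral_preimage_emb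
    (measurableEmbedding_addRight s) f (Ioi s)
  simpa using h

lemma integral_exp_neg_mul (lam : ℝ) (hlam : 0 < lam) :
    ∫ t in Ioi (0 : ℝ), Real.exp (-lam * t) = lam⁻¹ := by
  have h := integral_comp_mul_right_Ioi (fun x => Real.exp (-x)) 0 hlam
  simp only [zero_mul] at h
  have : (fun t : ℝ => Real.exp (-lam * t)) = fun t : ℝ => Real.exp (-(t * lam)) := by
    funext t; ring_nf
  rw [this, h, integral_exp_neg_Ioi_zero, smul_eq_mul, mul_one]

set_option maxHeartbeats 1000000 in
set_option synthInstance.maxHeartbeats 200000 in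
theorem resolvent_no_loss (n : ℕ) (hn : 1 ≤ n) (lam : ℝ) (hlam : 0 < lam)
    (ω : Fin n → ℝ) (σ : ℝ) (hσ : 0 < σ)
    (v : (Fin n → ℂ) → ℂ) (hv : MemB n σ v) :
    ∃ u : (Fin n → ℂ) → ℂ, MemB n σ u ∧
      (∀ z ∈ interior (TStrip n σ),
        -(lam : ℂ) * u z + fderiv ℂ u z (fun j => (ω j : ℂ)) = v z) ∧
      ∀ M : ℝ, (∀ z ∈ TStrip n σ, ‖v z‖ ≤ M) →
        ∀ z ∈ TStrip n σ, ‖u z‖ ≤ lam⁻¹ * M := by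
  classical
  obtain ⟨hvd, hvc, hvper, hvreal, M₀', hM₀'⟩ := hv
  set M₀ : ℝ := max M₀' 0 with hM₀def
  have hM₀ : ∀ z ∈ TStrip n σ, ‖v z‖ ≤ M₀ := fun z hz => le_trans (hM₀' z hz) (le_max_left _ _)
  set ωc : Fin n → ℂ := fun j => (ω j : ℂ) with hωc
  set f : (Fin n → ℂ) → ℝ → ℂ := fun z t => Real.exp (-lam * t) • v (z + t • ωc) with hfdef
  have him : ∀ (z : Fin n → ℂ) (t : ℝ) (j : Fin n), ((z + t • ωc) j).im = (z j).im := by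
    intro z t j
    simp [hωc, Complex.real_smul, ← Complex.ofReal_mul]
  have hmemT : ∀ z ∈ TStrip n σ, ∀ t : ℝ, z + t • ωc ∈ TStrip n σ := by
    intro z hz t j; rw [him]; exact hz j
  have hpathc : ∀ z : Fin n → ℂ, Continuous (fun t : ℝ => z + t • ωc) :=
    fun z => continuous_const.add (continuous_id.smul continuous_const)
  have hcont_t : ∀ z ∈ TStrip n σ, Continuous (f z) := by
    intro z hz
    exact Continuous.smul (Real.continuous_exp.comp (continuous_const.mul continuous_id))
      (hvc.comp_continuous (hpathc z) (fun t => hmemT z hz t))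
  have hbound_norm : ∀ M : ℝ, (∀ z ∈ TStrip n σ, ‖v z‖ ≤ M) →
      ∀ z ∈ TStrip n σ, ∀ t : ℝ, ‖f z t‖ ≤ M * Real.exp (-lam * t) := by
    intro M hM z hz t
    rw [hfdef]
    simp only
    rw [norm_smul, Real.norm_eq_abs, Real.abs_exp]
    calc Real.exp (-lam * t) * ‖v (z + t • ωc)‖ ≤ Real.exp (-lam * t) * M :=
          mul_le_mul_of_nonneg_left (hM _ (hmemT z hz t)) (Real.exp_nonneg _)
      _ = M * Real.exp (-lam * t) := mul_comm _ _
  have hbint : ∀ M s : ℝ, IntegrableOn (fun t => M * Real.exp (-lam * t)) (Ioi s) :=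
    fun M s => (exp_neg_integrableOn_Ioi s hlam).const_mul M
  have hint : ∀ z ∈ TStrip n σ, ∀ s : ℝ, IntegrableOn (f z) (Ioi s) := by
    intro z hz s
    exact Integrable.mono' (hbint M₀ s) ((hcont_t z hz).aestronglyMeasurable.restrict)
      (Filter.Eventually.of_forall fun t => hbound_norm M₀ hM₀ z hz t)
  set u : (Fin n → ℂ) → ℂ := fun z => -∫ t in Ioi (0:ℝ), f z t with hudef
  -- norm bound
  have hubound : ∀ M : ℝ, (∀ z ∈ TStrip n σ, ‖v z‖ ≤ M) →
      ∀ z ∈ TStrip n σ, ‖u z‖ ≤ lam⁻¹ * M := by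
    intro M hM z hz
    rw [hudef]
    simp only [norm_neg]
    calc ‖∫ t in Ioi (0:ℝ), f z t‖ ≤ ∫ t in Ioi (0:ℝ), M * Real.exp (-lam * t) :=
          norm_integral_le_of_norm_le (hbint M 0)
            (Filter.Eventually.of_forall fun t => hbound_norm M hM z hz t)
      _ = M * ∫ t in Ioi (0:ℝ), Real.exp (-lam * t) := integral_const_mul M _
      _ = lam⁻¹ * M := by rw [integral_exp_neg_mul lam hlam]; ring
  -- differentiability
  haveI : Nonempty (Fin n) := ⟨⟨0, hn⟩⟩
  have hudiff : ∀ z₀ ∈ interior (TStrip n σ), DifferentiableAt ℂ u z₀ := by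
    intro z₀ hz₀
    rw [interior_TStrip] at hz₀
    have hz₀T : z₀ ∈ TStrip n σ := fun j => (hz₀ j).le
    set m : ℝ := Finset.univ.sup' Finset.univ_nonempty (fun j => |(z₀ j).im|) with hmdef
    have hmlt : m < σ := by
      rw [hmdef, Finset.sup'_lt_iff]
      exact fun j _ => hz₀ j
    set δ : ℝ := (σ - m) / 3 with hδdef
    have hδ : 0 < δ := by rw [hδdef]; linarith
    have hsub : ∀ z ∈ ball z₀ δ, ∀ j, |(z j).im| < m + δ := by
      intro z hz j
      have h1 : |(z j).im - (z₀ j).im| ≤ dist z z₀ := by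
        calc |(z j).im - (z₀ j).im| = |((z - z₀) j).im| := by simp
          _ ≤ ‖(z - z₀) j‖ := by
                exact Complex.abs_im_le_norm _
          _ ≤ ‖z - z₀‖ := norm_le_pi_norm _ j
          _ = dist z z₀ := (dist_eq_norm z z₀).symm
      have h2 : |(z₀ j).im| ≤ m := Finset.le_sup' (fun j => |(z₀ j).im|) (Finset.mem_univ j)
      have h3 := abs_sub_abs_le_abs_sub (z j).im (z₀ j).im
      have h4 : dist z z₀ < δ := hz
      linarith
    have hzT : ∀ z ∈ ball z₀ δ, z ∈ TStrip n σ := by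
      intro z hz j
      have hh := hsub z hz j
      rw [hδdef] at hh
      linarith
    have hCau : ∀ z ∈ ball z₀ δ, ∀ t : ℝ, ‖fderiv ℂ v (z + t • ωc)‖ ≤ M₀ / δ := by
      intro z hz t
      apply fderiv_bound_on_strip hvd hvc hδ hM₀
      intro j
      rw [him]
      have hh := hsub z hz j
      rw [hδdef] at hh ⊢
      linarith
    have hDiffF : ∀ t : ℝ, ∀ z ∈ ball z₀ δ, HasFDerivAt (fun z => f z t)
        (Real.exp (-lam * t) • fderiv ℂ v (z + t • ωc)) z := by
      intro t z hz
      have hptS : z + t • ωc ∈ interior (TStrip n σ) := by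
        rw [interior_TStrip]
        intro j
        rw [him]
        have hh := hsub z hz j
        rw [hδdef] at hh
        linarith
      have hva := (hvd.differentiableAt (isOpen_interior.mem_nhds hptS)).hasFDerivAt
      have hcomp := hva.comp z ((hasFDerivAt_id z).add_const (t • ωc))
      have hsm := hcomp.const_smul (Real.exp (-lam * t))
      rw [ContinuousLinearMap.comp_id] at hsm
      exact hsm
    haveI : SecondCountableTopology ((Fin n → ℂ) →L[ℂ] ℂ) := by
      haveI : ProperSpace ((Fin n → ℂ) →L[ℂ] ℂ) := FiniteDimensional.proper ℂ _
      infer_instance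
    have hmeas' : AEStronglyMeasurable
        (fun t : ℝ => Real.exp (-lam * t) • fderiv ℂ v (z₀ + t • ωc))
        (volume.restrict (Ioi (0:ℝ))) := by
      have hm1 : Measurable fun t : ℝ => fderiv ℂ v (z₀ + t • ωc) :=
        (measurable_fderiv ℂ v).comp (hpathc z₀).measurable
      exact (Continuous.aestronglyMeasurable
        (Real.continuous_exp.comp (continuous_const.mul continuous_id))).smul
        hm1.aestronglyMeasurable
    have key := hasFDerivAt_integral_of_dominated_of_fderiv_le
      (F := f) (F' := fun z t => Real.exp (-lam * t) • fderiv ℂ v (z + t • ωc))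
      (bound := fun t => Real.exp (-lam * t) * (M₀ / δ))
      (μ := volume.restrict (Ioi (0:ℝ))) (x₀ := z₀) (ball_mem_nhds z₀ hδ)
      (Filter.eventually_of_mem (ball_mem_nhds z₀ hδ) fun z hz =>
        ((hcont_t z (hzT z hz)).aestronglyMeasurable).restrict)
      (hint z₀ hz₀T 0)
      hmeas'
      (Filter.Eventually.of_forall fun t z hz => by
        show ‖Real.exp (-lam * t) • fderiv ℂ v (z + t • ωc)‖ ≤ Real.exp (-lam * t) * (M₀ / δ)
        rw [norm_smul, Real.norm_eq_abs, Real.abs_exp]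
        exact mul_le_mul_of_nonneg_left (hCau z hz t) (Real.exp_nonneg _))
      ((exp_neg_integrableOn_Ioi 0 hlam).mul_const (M₀ / δ))
      (Filter.Eventually.of_forall fun t z hz => hDiffF t z hz)
    rw [hudef]
    exact key.neg.differentiableAt
  -- the PDE
  have hPDE : ∀ z ∈ interior (TStrip n σ),
      -(lam : ℂ) * u z + fderiv ℂ u z ωc = v z := by
    intro z hz
    have hz' : z ∈ TStrip n σ := interior_subset hz
    set A : ℂ := ∫ t in Ioi (0:ℝ), f z t with hA
    have hshift : ∀ s : ℝ, u (z + s • ωc)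
        = -(Real.exp (lam * s) • (A - ∫ t in (0:ℝ)..s, f z t)) := by
      intro s
      have e1 : ∀ t : ℝ, z + s • ωc + t • ωc = z + (t + s) • ωc := by
        intro t
        rw [add_smul]
        abel
      have e2 : (fun t : ℝ => f (z + s • ωc) t)
          = fun t : ℝ => (fun r : ℝ => Real.exp (lam * s) • f z r) (t + s) := by
        funext t
        rw [hfdef]
        simp only
        rw [e1, smul_smul, ← Real.exp_add]
        have : lam * s + -lam * (t + s) = -lam * t := by ring
        rw [this]
      have e3 : ∫ t in Ioi s, f z t = A - ∫ t in (0:ℝ)..s, f z t := by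
        have hsplit := integral_Ioi_split (fun c => hint z hz' c) 0 s
        rw [← hA] at hsplit
        linear_combination -hsplit
      calc u (z + s • ωc) = -∫ t in Ioi (0:ℝ), f (z + s • ωc) t := by rw [hudef]
        _ = -∫ t in Ioi (0:ℝ), (fun r : ℝ => Real.exp (lam * s) • f z r) (t + s) := by rw [e2]
        _ = -∫ t in Ioi s, Real.exp (lam * s) • f z t := by
              rw [integral_Ioi_comp_add (fun r : ℝ => Real.exp (lam * s) • f z r) s]
        _ = -(Real.exp (lam * s) • ∫ t in Ioi s, f z t) := by rw [integral_smul]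
        _ = -(Real.exp (lam * s) • (A - ∫ t in (0:ℝ)..s, f z t)) := by rw [e3]
    have hG : HasDerivAt (fun s : ℝ => A - ∫ t in (0:ℝ)..s, f z t) (-(v z)) 0 := by
      have h1 : HasDerivAt (fun s : ℝ => ∫ t in (0:ℝ)..s, f z t) (f z 0) 0 :=
        intervalIntegral.integral_hasDerivAt_right
          ((hcont_t z hz').intervalIntegrable 0 0)
          ((hcont_t z hz').stronglyMeasurable.stronglyMeasurableAtFilter)
          (hcont_t z hz').continuousAt
      have hfz0 : f z 0 = v z := by
        rw [hfdef]
        simp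
      rw [← hfz0]
      exact h1.const_sub A
    have hc : HasDerivAt (fun s : ℝ => Real.exp (lam * s)) lam 0 := by
      have h0 : HasDerivAt (fun s : ℝ => lam * s) lam 0 := by
        simpa using (hasDerivAt_id (0:ℝ)).const_mul lam
      simpa using h0.exp
    have hprod := (hc.smul hG).neg
    have hφ1 : HasDerivAt (fun s : ℝ => u (z + s • ωc)) (v z - (lam : ℂ) * A) 0 := by
      have heq : (fun s : ℝ => u (z + s • ωc))
          = fun s : ℝ => -(Real.exp (lam * s) • (A - ∫ t in (0:ℝ)..s, f z t)) :=
        funext hshift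
      rw [heq]
      refine hprod.congr_deriv ?_
      simp [intervalIntegral.integral_same, Complex.real_smul]
      ring
    have hpath0 : HasDerivAt (fun s : ℝ => z + s • ωc) ωc 0 := by
      simpa using ((hasDerivAt_id (0:ℝ)).smul_const ωc).const_add z
    have hud : DifferentiableAt ℂ u z := hudiff z hz
    have hfd : HasFDerivAt u ((fderiv ℂ u z).restrictScalars ℝ) (z + (0:ℝ) • ωc) := by
      rw [show z + (0:ℝ) • ωc = z by simp]
      exact hud.hasFDerivAt.restrictScalars ℝ
    have hφ2 : HasDerivAt (fun s : ℝ => u (z + s • ωc)) (fderiv ℂ u z ωc) 0 := by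
      have h := hfd.comp_hasDerivAt 0 hpath0
      exact h
    have huniq : fderiv ℂ u z ωc = v z - (lam : ℂ) * A := hφ2.unique hφ1
    have huz : u z = -A := by rw [hudef]
    rw [huniq, huz]
    ring
  refine ⟨u, ⟨?_, ?_, ?_, ?_, ?_⟩, hPDE, hubound⟩
  · exact fun z hz => (hudiff z hz).differentiableWithinAt
  · rw [hudef]
    apply ContinuousOn.neg
    apply continuousOn_of_dominated (bound := fun t => M₀ * Real.exp (-lam * t))
    · intro z hz
      exact ((hcont_t z hz).aestronglyMeasurable).restrict
    · intro z hz
      exact Filter.Eventually.of_forall fun t => hbound_norm M₀ hM₀ z hz t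
    · exact hbint M₀ 0
    · apply Filter.Eventually.of_forall
      intro t
      rw [hfdef]
      exact ((hvc.comp (Continuous.continuousOn (continuous_id.add continuous_const))
        (fun z hz => hmemT z hz t)).const_smul (Real.exp (-lam * t)))
  · intro z hz j
    have hfeq : f (Function.update z j (z j + 2 * Real.pi)) = f z := by
      funext t
      rw [hfdef]
      simp only
      have harg : Function.update z j (z j + 2 * Real.pi) + t • ωc
          = Function.update (z + t • ωc) j ((z + t • ωc) j + 2 * Real.pi) := by
        funext k
        rcases eq_or_ne k j with rfl | hk
        · simp only [Pi.add_apply, Function.update_self]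
          ring
        · simp [Function.update_of_ne hk]
      rw [harg, hvper (z + t • ωc) (hmemT z hz t) j]
    rw [hudef]
    simp only
    rw [hfeq]
  · intro φ
    have hzT : (fun j => (φ j : ℂ)) ∈ TStrip n σ := by
      intro j
      simp [hσ.le]
    rw [hudef]
    simp only [Complex.neg_im, neg_eq_zero]
    have h1 := integral_im (𝕜 := ℂ) (hint _ hzT 0)
    simp only [RCLike.im_to_complex] at h1
    rw [← h1]
    apply integral_eq_zero_of_ae
    apply Filter.Eventually.of_forall
    intro t
    have hpt : (fun j => (φ j : ℂ)) + t • ωc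
        = fun j => (((fun j => φ j + t * ω j) j : ℝ) : ℂ) := by
      funext k
      simp only [Pi.add_apply, Pi.smul_apply, hωc, Complex.real_smul]
      push_cast
      ring
    rw [hfdef]
    simp only
    rw [hpt, Complex.smul_im, hvreal (fun j => φ j + t * ω j), smul_zero]
    simp
  · exact ⟨lam⁻¹ * M₀, hubound M₀ hM₀⟩
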